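/- For any sparsity pattern S, the generic rank sprank(A^S) equals ν(S), the maximum cardinality of a matching of S (i.e., the maximum bipartite matching of the bipartite graph whose edges are the pairs in S). -/

import Mathlib

open Matrix MeasureTheory

/-- `A` has sparsity pattern `S`: the nonzero entries of `A` are exactly those indexed by `S`. -/
def HasPattern {m n : ℕ} (S : Finset (Fin m × Fin n)) (A : Matrix (Fin m) (Fin n) ℝ) : Prop :=
  ∀ i j, A i j ≠ 0 ↔ (i, j) ∈ S

/-- Generic rank of the class of matrices with sparsity pattern `S`. -/
noncomputable def sprank {m n : ℕ} (S : Finset (Fin m × Fin n)) : ℕ :=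
  sSup {r : ℕ | ∃ A : Matrix (Fin m) (Fin n) ℝ, HasPattern S A ∧ A.rank = r}

/-- The sparsity pattern restricted to the rows in `T` (rows outside `T` become zero). -/
def patternOn {m n : ℕ} (S : Finset (Fin m × Fin n)) (T : Finset (Fin m)) :
    Finset (Fin m × Fin n) :=
  S.filter (fun p => p.1 ∈ T)

/-- A matching of a sparsity pattern: any two distinct pairs differ in both coordinates. -/
def IsMatching {m n : ℕ} (M : Finset (Fin m × Fin n)) : Prop :=
  ∀ p ∈ M, ∀ q ∈ M, p ≠ q → p.1 ≠ q.1 ∧ p.2 ≠ q.2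

/-- `nu S` : maximum cardinality of a matching contained in `S`. -/
noncomputable def nu {m n : ℕ} (S : Finset (Fin m × Fin n)) : ℕ :=
  sSup {k : ℕ | ∃ M ⊆ S, IsMatching M ∧ M.card = k}

/-- ℓ₀ "norm": number of nonzero entries of a vector. -/
noncomputable def l0 {m : ℕ} (y : Fin m → ℝ) : ℕ :=
  (Finset.univ.filter (fun i => y i ≠ 0)).card

/-- `cospark A` : minimum of `‖A x‖₀` over nonzero `x`. -/
noncomputable def cospark {m n : ℕ} (A : Matrix (Fin m) (Fin n) ℝ) : ℕ :=
  sInf {k : ℕ | ∃ x : Fin n → ℝ, x ≠ 0 ∧ l0 (A.mulVec x) = k}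

/-- Generic cospark of the class of matrices with sparsity pattern `S`. -/
noncomputable def spcospark {m n : ℕ} (S : Finset (Fin m × Fin n)) : ℕ :=
  sSup {k : ℕ | ∃ A : Matrix (Fin m) (Fin n) ℝ, HasPattern S A ∧ cospark A = k}

/-- The row-submatrix `A_T`, realized as `A` with the rows outside `T` zeroed out. -/
noncomputable def rowRestrict {m n : ℕ} (A : Matrix (Fin m) (Fin n) ℝ) (T : Finset (Fin m)) :
    Matrix (Fin m) (Fin n) ℝ :=
  Matrix.of fun i j => if i ∈ T then A i j else 0

/-- `X_W` : the rows of the pattern `S` all of whose nonzero positions lie in the columns `W`. -/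
def rowsIn {m n : ℕ} (S : Finset (Fin m × Fin n)) (W : Finset (Fin n)) : Finset (Fin m) :=
  Finset.univ.filter (fun i => ∀ j, (i, j) ∈ S → j ∈ W)

lemma aux_rank_ge {m n k : ℕ} (A : Matrix (Fin m) (Fin n) ℝ)
    (f : Fin k → Fin m) (g : Fin k → Fin n) (h : (A.submatrix f g).det ≠ 0) :
    k ≤ A.rank := by
  classical
  set P : Matrix (Fin k) (Fin m) ℝ := Matrix.of fun a i => if f a = i then 1 else 0 with hP
  set Q : Matrix (Fin n) (Fin k) ℝ := Matrix.of fun j b => if g b = j then 1 else 0 with hQ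
  have hPA : ∀ a j, (P * A) a j = A (f a) j := by
    intro a j
    simp [Matrix.mul_apply, hP, ite_mul]
  have hPQ : P * A * Q = A.submatrix f g := by
    ext a b
    simp [Matrix.mul_apply, hPA, hQ, mul_ite]
  have hr : (A.submatrix f g).rank = k := by
    rw [Matrix.rank_of_isUnit _ ((Matrix.isUnit_iff_isUnit_det _).mpr
      (isUnit_iff_ne_zero.mpr h)), Fintype.card_fin]
  calc k = (P * A * Q).rank := by rw [hPQ, hr]
    _ ≤ (P * A).rank := Matrix.rank_mul_le_left _ _
    _ ≤ A.rank := Matrix.rank_mul_le_right _ _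

lemma aux_cols {m n r : ℕ} (A : Matrix (Fin m) (Fin n) ℝ) (h : A.rank = r) :
    ∃ g : Fin r → Fin n, Function.Injective g ∧ LinearIndependent ℝ (fun a => Aᵀ (g a)) := by
  classical
  obtain ⟨t, hts, hspan, hind⟩ := exists_linearIndependent ℝ (Set.range Aᵀ)
  have htfin : t.Finite := (Set.finite_range Aᵀ).subset hts
  haveI : Fintype t := htfin.fintype
  have hcard : Fintype.card t = r := by
    rw [← Set.toFinset_card, ← finrank_span_set_eq_card hind, hspan]
    exact (Matrix.rank_eq_finrank_span_cols A).symm.trans h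
  let e : Fin r ≃ t := (Fintype.equivFinOfCardEq hcard).symm
  have hmem : ∀ a : Fin r, (e a : Fin m → ℝ) ∈ Set.range Aᵀ := fun a => hts (e a).2
  choose g hg using hmem
  refine ⟨g, ?_, ?_⟩
  · intro a b hab
    have : (e a : Fin m → ℝ) = (e b : Fin m → ℝ) := by rw [← hg a, ← hg b, hab]
    exact e.injective (Subtype.ext this)
  · have : (fun a => Aᵀ (g a)) = (fun x : t => (x : Fin m → ℝ)) ∘ e := by
      funext a; exact hg a
    rw [this]
    exact hind.comp e e.injective

open Polynomial in
lemma aux_construct {m n : ℕ} (S M : Finset (Fin m × Fin n)) (hMS : M ⊆ S)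
    (hM : IsMatching M) :
    ∃ A : Matrix (Fin m) (Fin n) ℝ, HasPattern S A ∧ M.card ≤ A.rank := by
  classical
  set k := M.card with hk
  -- enumerate the matching
  let e : M ≃ Fin k := M.equivFin
  let f : Fin k → Fin m := fun a => ((e.symm a : Fin m × Fin n)).1
  let g : Fin k → Fin n := fun a => ((e.symm a : Fin m × Fin n)).2
  have hpair : ∀ a : Fin k, (f a, g a) ∈ M := fun a => (e.symm a).2
  have hginj : Function.Injective g := by
    intro a b hab
    by_contra hne
    have h1 : (e.symm a : Fin m × Fin n) ≠ (e.symm b : Fin m × Fin n) :=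
      fun h => hne (e.symm.injective (Subtype.ext h))
    exact (hM _ (e.symm a).2 _ (e.symm b).2 h1).2 hab
  have hfinj : Function.Injective f := by
    intro a b hab
    by_contra hne
    have h1 : (e.symm a : Fin m × Fin n) ≠ (e.symm b : Fin m × Fin n) :=
      fun h => hne (e.symm.injective (Subtype.ext h))
    exact (hM _ (e.symm a).2 _ (e.symm b).2 h1).1 hab
  have hkey : ∀ a b : Fin k, ((f a, g b) ∈ M ↔ a = b) := by
    intro a b
    constructor
    · intro hmem
      by_contra hne
      have hne' : (f a, g b) ≠ (f a, g a) := by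
        intro h
        exact hne (hginj (Prod.ext_iff.mp h).2).symm
      exact (hM _ hmem _ (hpair a) hne').1 rfl
    · rintro rfl; exact hpair a
  -- polynomial matrix
  set B : Matrix (Fin k) (Fin k) ℝ[X] :=
    Matrix.of (fun a b : Fin k => if (f a, g b) ∈ M then (X : ℝ[X])
      else if (f a, g b) ∈ S then 1 else 0) with hBdef
  have hBdiag : ∀ a b, B a b = if a = b then (X : ℝ[X]) else if (f a, g b) ∈ S then 1 else 0 := by
    intro a b
    simp only [hBdef, Matrix.of_apply, hkey a b]
  have hcoeff : (B.det).coeff k = 1 := by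
    rw [Matrix.det_apply]
    rw [Polynomial.finset_sum_coeff]
    rw [Finset.sum_eq_single (1 : Equiv.Perm (Fin k))]
    · simp only [Equiv.Perm.sign_one, one_smul, Equiv.Perm.one_apply]
      have : (∏ i, B i i) = X ^ k := by
        rw [Finset.prod_congr rfl (fun i _ => by rw [hBdiag i i, if_pos rfl])]
        simp
      rw [this, Polynomial.coeff_X_pow, if_pos rfl]
    · intro σ _ hσ
      have hfix : ∃ a, σ a ≠ a := by
        by_contra hcon
        push_neg at hcon
        exact hσ (Equiv.ext hcon)
      obtain ⟨a₀, ha₀⟩ := hfix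
      have hdeg : (∏ i, B (σ i) i).natDegree < k := by
        calc (∏ i, B (σ i) i).natDegree ≤ ∑ i, (B (σ i) i).natDegree :=
              Polynomial.natDegree_prod_le _ _
          _ < ∑ _i : Fin k, 1 := by
              apply Finset.sum_lt_sum
              · intro i _
                rw [hBdiag]
                split_ifs <;> simp
              · refine ⟨a₀, Finset.mem_univ _, ?_⟩
                rw [hBdiag, if_neg ha₀]
                split_ifs <;> simp
          _ = k := by simp
      rw [Polynomial.coeff_smul, Polynomial.coeff_eq_zero_of_natDegree_lt hdeg, smul_zero]
    · intro h; exact absurd (Finset.mem_univ _) h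
  have hpne : B.det ≠ 0 := fun h => by simp [h] at hcoeff
  -- pick a good evaluation point
  have hx : ∃ x : ℝ, x ≠ 0 ∧ (B.det).eval x ≠ 0 := by
    by_contra hcon
    push_neg at hcon
    have : B.det * X = 0 := by
      apply Polynomial.funext
      intro x
      rcases eq_or_ne x 0 with rfl | hx0
      · simp
      · simp [hcon x hx0]
    exact (mul_ne_zero hpne Polynomial.X_ne_zero) this
  obtain ⟨x, hx0, hxev⟩ := hx
  -- the real matrix
  set A : Matrix (Fin m) (Fin n) ℝ :=
    Matrix.of (fun i j => if (i, j) ∈ M then x else if (i, j) ∈ S then 1 else 0) with hAdef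
  have hpat : HasPattern S A := by
    intro i j
    simp only [hAdef, Matrix.of_apply]
    split_ifs with h1 h2
    · simpa [hx0] using hMS h1
    · simpa using h2
    · simp [h2]
  have hmapdet : (A.submatrix f g).det = (B.det).eval x := by
    have : A.submatrix f g = B.map (Polynomial.evalRingHom x) := by
      ext a b
      simp only [Matrix.submatrix_apply, Matrix.map_apply, hBdef, Matrix.of_apply, hAdef]
      split_ifs <;> simp
    have hd := RingHom.map_det (Polynomial.evalRingHom x) B
    rw [RingHom.mapMatrix_apply] at hd
    rw [this, ← hd]
    simp
  refine ⟨A, hpat, ?_⟩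
  apply aux_rank_ge A f g
  rw [hmapdet]
  exact hxev


lemma aux_matching {m n : ℕ} (S : Finset (Fin m × Fin n)) (A : Matrix (Fin m) (Fin n) ℝ)
    (hA : HasPattern S A) :
    ∃ M ⊆ S, IsMatching M ∧ M.card = A.rank := by
  classical
  set r := A.rank with hr
  obtain ⟨g, hginj, hgind⟩ := aux_cols A rfl
  set B : Matrix (Fin m) (Fin r) ℝ := A.submatrix id g with hB
  have hBT : Bᵀ = fun b => Aᵀ (g b) := rfl
  have hrB : B.rank = r := by
    rw [Matrix.rank_eq_finrank_span_cols]
    show Module.finrank ℝ (Submodule.span ℝ (Set.range Bᵀ)) = r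
    rw [hBT, finrank_span_eq_card hgind, Fintype.card_fin]
  have hrBT : Bᵀ.rank = r := by rw [Matrix.rank_transpose, hrB]
  obtain ⟨f, hfinj, hfind⟩ := aux_cols Bᵀ hrBT
  rw [Matrix.transpose_transpose] at hfind
  set C : Matrix (Fin r) (Fin r) ℝ := B.submatrix f id with hC
  have hCrows : LinearIndependent ℝ (fun a => C a) := hfind
  have hdet : C.det ≠ 0 := by
    have := (Matrix.linearIndependent_rows_iff_isUnit (K := ℝ)).mp hCrows
    exact ((Matrix.isUnit_iff_isUnit_det _).mp this).ne_zero
  have hperm : ∃ σ : Equiv.Perm (Fin r), (∏ i, C (σ i) i) ≠ 0 := by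
    by_contra hcon
    push_neg at hcon
    apply hdet
    rw [Matrix.det_apply]
    exact Finset.sum_eq_zero fun σ _ => by rw [hcon σ, smul_zero]
  obtain ⟨σ, hσ⟩ := hperm
  have hent : ∀ i, C (σ i) i ≠ 0 := fun i =>
    Finset.prod_ne_zero_iff.mp hσ i (Finset.mem_univ i)
  have hmemS : ∀ i, (f (σ i), g i) ∈ S := fun i => (hA _ _).mp (hent i)
  refine ⟨Finset.image (fun i => (f (σ i), g i)) Finset.univ, ?_, ?_, ?_⟩
  · intro p hp
    obtain ⟨i, _, rfl⟩ := Finset.mem_image.mp hp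
    exact hmemS i
  · intro p hp q hq hpq
    obtain ⟨i, _, rfl⟩ := Finset.mem_image.mp hp
    obtain ⟨j, _, rfl⟩ := Finset.mem_image.mp hq
    have hij : i ≠ j := fun h => hpq (by rw [h])
    exact ⟨fun h => hij (σ.injective (hfinj h)), fun h => hij (hginj h)⟩
  · rw [Finset.card_image_of_injective _ (fun i j hij => hginj (congrArg Prod.snd hij)),
      Finset.card_univ, Fintype.card_fin]

theorem stmt1 {m n : ℕ} (hn : 1 ≤ n) (hmn : n < m) (S : Finset (Fin m × Fin n)) :
    sprank S = nu S := by
  classical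
  have hbd1 : BddAbove {r : ℕ | ∃ A : Matrix (Fin m) (Fin n) ℝ, HasPattern S A ∧ A.rank = r} := by
    refine ⟨n, fun r hr => ?_⟩
    obtain ⟨A, -, rfl⟩ := hr
    exact A.rank_le_width
  have hbd2 : BddAbove {k : ℕ | ∃ M ⊆ S, IsMatching M ∧ M.card = k} := by
    refine ⟨S.card, fun k hk => ?_⟩
    obtain ⟨M, hMS, -, rfl⟩ := hk
    exact Finset.card_le_card hMS
  apply le_antisymm
  · have hne : {r : ℕ | ∃ A : Matrix (Fin m) (Fin n) ℝ, HasPattern S A ∧ A.rank = r}.Nonempty := by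
      refine ⟨_, Matrix.of (fun i j => if (i, j) ∈ S then (1 : ℝ) else 0), fun i j => ?_, rfl⟩
      simp only [Matrix.of_apply]
      split_ifs with h <;> simp [h]
    refine csSup_le hne ?_
    rintro r ⟨A, hA, rfl⟩
    obtain ⟨M, hMS, hM, hcard⟩ := aux_matching S A hA
    exact le_csSup hbd2 ⟨M, hMS, hM, hcard⟩
  · refine csSup_le ⟨0, ∅, Finset.empty_subset _,
      fun p hp => absurd hp (Finset.notMem_empty p), Finset.card_empty⟩ ?_
    rintro k ⟨M, hMS, hM, rfl⟩
    obtain ⟨A, hpat, hrank⟩ := aux_construct S M hMS hM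
    exact hrank.trans (le_csSup hbd1 ⟨A, hpat, rfl⟩)
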